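/- Suppose p is generic for G, some node label B_{ii} with 1 ≤ i ≤ n−2 is a nonzero square mod p, the subspaces V_0, V_{n−1} and V_{0,n−1} are all nonsingular, and G_0^p = O(V_0) and G_{n−1}^p = O(V_{n−1}). Then G_0^p ∩ G_{n−1}^p = O(V_{0,n−1}). -/

import Mathlib

/- Setup: reduction mod an odd prime `p` of a crystallographic Coxeter group
`G = ⟨r₀, …, r_{n−1}⟩` with string diagram and Gram matrix `B`. -/

namespace Statement3

variable (n p : ℕ)

/-- `V = (ZMod p)^n`. -/
abbrev V := Fin n → ZMod p

/-- The general linear group of `V`. -/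
abbrev GLV := (Module.End (ZMod p) (V n p))ˣ

/-- Reduction of a rational number mod `p` (meaningful when the denominator is prime to `p`). -/
def redQ (q : ℚ) : ZMod p := (q.num : ZMod p) * ((q.den : ZMod p))⁻¹

/-- The standard basis vector `b_i`. -/
def basisVec (i : Fin n) : V n p := Pi.single i 1

/-- The symmetric bilinear form on `V` obtained by reducing the Gram matrix `B` mod `p`. -/
def form (B : Matrix (Fin n) (Fin n) ℚ) (x y : V n p) : ZMod p :=
  ∑ i, ∑ j, x i * redQ p (B i j) * y j

/-- `B` is the Gram matrix of a basic system for a crystallographic Coxeter group with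
string diagram: symmetric, tridiagonal, positive integer node labels, integer Cartan
entries, and branch condition `4 B_{i-1,i}² = c ⬝ B_{i-1,i-1} ⬝ B_{ii}` with `c ∈ {1,2,3,4}`
(or `B_{i-1,i} = 0`, i.e. an absent branch). -/
def GramOK (B : Matrix (Fin n) (Fin n) ℚ) : Prop :=
  (∀ i j, B i j = B j i) ∧
  (∀ i j : Fin n, 1 < |(i : ℤ) - (j : ℤ)| → B i j = 0) ∧
  (∀ i, ∃ m : ℕ, 0 < m ∧ B i i = m) ∧
  (∀ i j, ∃ c : ℤ, 2 * B i j / B i i = (c : ℚ)) ∧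
  (∀ i : Fin n, ∀ h : (i : ℕ) + 1 < n,
    B i ⟨(i : ℕ) + 1, h⟩ = 0 ∨
      ∃ c : ℕ, 1 ≤ c ∧ c ≤ 4 ∧
        4 * (B i ⟨(i : ℕ) + 1, h⟩) ^ 2 = c * B i i * B ⟨(i : ℕ) + 1, h⟩ ⟨(i : ℕ) + 1, h⟩)

/-- All entries of `B` are `p`-integral. -/
def PIntegral (B : Matrix (Fin n) (Fin n) ℚ) : Prop :=
  ∀ i j, ¬ (p ∣ (B i j).den)

/-- `p` is generic for `G`: either `p ≥ 5`, or `p = 3` and no branch is labelled `6`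
(a branch `{i, i+1}` is labelled `6` exactly when `4 B_{i,i+1}² = 3 ⬝ B_{ii} ⬝ B_{i+1,i+1}`). -/
def Generic (B : Matrix (Fin n) (Fin n) ℚ) : Prop :=
  5 ≤ p ∨ (p = 3 ∧ ∀ i : Fin n, ∀ h : (i : ℕ) + 1 < n,
    4 * (B i ⟨(i : ℕ) + 1, h⟩) ^ 2 ≠ 3 * B i i * B ⟨(i : ℕ) + 1, h⟩ ⟨(i : ℕ) + 1, h⟩)

/-- `r i` is the reduction mod `p` of the generating reflection `r_i`, determined by its
action on the standard basis: `r_i(b_j) = b_j − C_{ij} b_i` with `C_{ij} = 2 B_{ij}/B_{ii}`. -/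
def ReflHyp (B : Matrix (Fin n) (Fin n) ℚ) (r : Fin n → GLV n p) : Prop :=
  ∀ i j : Fin n, (r i).1 (basisVec n p j) =
    basisVec n p j - redQ p (2 * B i j / B i i) • basisVec n p i

/-- The intersection property (string C-group condition) for the subgroups generated by
the reflections `r i`, `i ∈ S`. -/
def IsStringC (r : Fin n → GLV n p) (S : Set (Fin n)) : Prop :=
  ∀ I J : Set (Fin n), I ⊆ S → J ⊆ S →
    Subgroup.closure (r '' I) ⊓ Subgroup.closure (r '' J) = Subgroup.closure (r '' (I ∩ J))

/-- The span of the basis vectors `b_i`, `i ∈ S`. -/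
def spanV (S : Set (Fin n)) : Submodule (ZMod p) (V n p) :=
  Submodule.span (ZMod p) (basisVec n p '' S)

/-- The subspace `W` is nonsingular: the restriction of the form to `W` is nondegenerate. -/
def Nonsing (B : Matrix (Fin n) (Fin n) ℚ) (W : Submodule (ZMod p) (V n p)) : Prop :=
  ∀ x ∈ W, (∀ y ∈ W, form n p B x y = 0) → x = 0

/-- The full orthogonal group `O(V)` of the form, as a subgroup of `GL(V)`. -/
def OV (B : Matrix (Fin n) (Fin n) ℚ) : Subgroup (GLV n p) where
  carrier := {g | ∀ x y, form n p B (g.1 x) (g.1 y) = form n p B x y}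
  one_mem' := by intro x y; simp
  mul_mem' := by
    intro a b ha hb x y
    simpa [Units.val_mul] using (ha (b.1 x) (b.1 y)).trans (hb x y)
  inv_mem' := by
    intro a ha x y
    have key : ∀ z, a.1 ((a⁻¹ : GLV n p).1 z) = z := by
      intro z
      rw [← Module.End.mul_apply, ← Units.val_mul, mul_inv_cancel, Units.val_one,
        Module.End.one_apply]
    have h := ha ((a⁻¹ : GLV n p).1 x) ((a⁻¹ : GLV n p).1 y)
    rw [key, key] at h
    exact h.symm

/-- `g` fixes `W^⊥` pointwise. -/
def perpFix (B : Matrix (Fin n) (Fin n) ℚ) (W : Submodule (ZMod p) (V n p))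
    (g : GLV n p) : Prop :=
  ∀ u : V n p, (∀ w ∈ W, form n p B u w = 0) → g.1 u = u

/-- `O(W)` identified with the subgroup `{g ∈ O(V) : g(W) = W, g fixes W^⊥ pointwise}`
of `O(V)`. -/
def OSub (B : Matrix (Fin n) (Fin n) ℚ) (W : Submodule (ZMod p) (V n p)) :
    Subgroup (GLV n p) where
  carrier := {g | g ∈ OV n p B ∧ Submodule.map g.1 W = W ∧ perpFix n p B W g}
  one_mem' := by
    refine ⟨(OV n p B).one_mem, ?_, fun u _ => by simp⟩
    simp [Module.End.one_eq_id]
  mul_mem' := by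
    rintro a b ⟨ha1, ha2, ha3⟩ ⟨hb1, hb2, hb3⟩
    refine ⟨mul_mem ha1 hb1, ?_, ?_⟩
    · rw [Units.val_mul, Module.End.mul_eq_comp, Submodule.map_comp, hb2, ha2]
    · intro u hu
      rw [Units.val_mul, Module.End.mul_apply, hb3 u hu, ha3 u hu]
  inv_mem' := by
    rintro a ⟨ha1, ha2, ha3⟩
    have key : ∀ z, (a⁻¹ : GLV n p).1 (a.1 z) = z := fun z => by
      rw [← Module.End.mul_apply, ← Units.val_mul, inv_mul_cancel, Units.val_one,
        Module.End.one_apply]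
    refine ⟨(OV n p B).inv_mem ha1, ?_, ?_⟩
    · conv_lhs => rw [← ha2]
      rw [← Submodule.map_comp, ← Module.End.mul_eq_comp, ← Units.val_mul, inv_mul_cancel,
        Units.val_one, Module.End.one_eq_id]
      simp
    · intro u hu
      conv_lhs => rw [← ha3 u hu]
      exact key u

/-- `g` is the reflection `r_a` with root `a ∈ W`, where `a·a` is a nonzero square. -/
def IsSqRefl (B : Matrix (Fin n) (Fin n) ℚ) (W : Submodule (ZMod p) (V n p))
    (g : GLV n p) : Prop :=
  ∃ a ∈ W, (∃ t : ZMod p, t ≠ 0 ∧ form n p B a a = t ^ 2) ∧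
    ∀ x, g.1 x = x - (2 * form n p B x a * (form n p B a a)⁻¹) • a

/-- `g` is the reflection `r_a` with root `a ∈ W`, where `a·a` is a nonsquare. -/
def IsNonsqRefl (B : Matrix (Fin n) (Fin n) ℚ) (W : Submodule (ZMod p) (V n p))
    (g : GLV n p) : Prop :=
  ∃ a ∈ W, (∀ t : ZMod p, form n p B a a ≠ t ^ 2) ∧
    ∀ x, g.1 x = x - (2 * form n p B x a * (form n p B a a)⁻¹) • a

/-- `O₁(W)` (resp. `Ô₁(W)` when `W` is singular): the subgroup generated by all
reflections `r_a` with root `a ∈ W` of square norm. -/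
def O1 (B : Matrix (Fin n) (Fin n) ℚ) (W : Submodule (ZMod p) (V n p)) :
    Subgroup (GLV n p) :=
  Subgroup.closure {g | IsSqRefl n p B W g}

/-- `O₂(W)`: the subgroup generated by all reflections `r_a` with root `a ∈ W`
of nonsquare norm. -/
def O2 (B : Matrix (Fin n) (Fin n) ℚ) (W : Submodule (ZMod p) (V n p)) :
    Subgroup (GLV n p) :=
  Subgroup.closure {g | IsNonsqRefl n p B W g}

/-- `H` is of orthogonal type on the (nonsingular) subspace `W`. -/
def OrthType (B : Matrix (Fin n) (Fin n) ℚ) (W : Submodule (ZMod p) (V n p))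
    (H : Subgroup (GLV n p)) : Prop :=
  H = OSub n p B W ∨ H = O1 n p B W ∨ H = O2 n p B W


/- ===== auxiliary lemmas ===== -/

section Aux

variable (n p : ℕ)

/-- The bilinear form as a Mathlib `BilinForm`. -/
noncomputable def Phi (B : Matrix (Fin n) (Fin n) ℚ) : LinearMap.BilinForm (ZMod p) (V n p) :=
  Matrix.toBilin' (fun i j => redQ p (B i j))

lemma Phi_apply (B : Matrix (Fin n) (Fin n) ℚ) (x y : V n p) :
    Phi n p B x y = form n p B x y := Matrix.toBilin'_apply _ _ _

lemma form_symm {B : Matrix (Fin n) (Fin n) ℚ} (hB : ∀ i j, B i j = B j i) (x y : V n p) :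
    form n p B x y = form n p B y x := by
  unfold form
  conv_rhs => rw [Finset.sum_comm]
  exact Finset.sum_congr rfl fun a _ => Finset.sum_congr rfl fun b _ => by rw [hB a b]; ring

lemma Phi_isRefl {B : Matrix (Fin n) (Fin n) ℚ} (hB : ∀ i j, B i j = B j i) :
    (Phi n p B).IsRefl := by
  intro x y h
  rw [Phi_apply] at h ⊢
  rw [form_symm n p hB]; exact h

lemma mem_spanV {S : Set (Fin n)} {x : V n p} :
    x ∈ spanV n p S ↔ ∀ i, i ∉ S → x i = 0 := by
  constructor
  · intro hx
    have : spanV n p S ≤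
        { carrier := {x : V n p | ∀ i, i ∉ S → x i = 0}
          zero_mem' := by intro i _; rfl
          add_mem' := by intro a b ha hb i hi; simp [ha i hi, hb i hi]
          smul_mem' := by intro c a ha i hi; simp [ha i hi] } := by
      rw [spanV, Submodule.span_le]
      rintro _ ⟨i, hi, rfl⟩ j hj
      have : j ≠ i := fun h => hj (h ▸ hi)
      simp [basisVec, Pi.single_apply, this]
    exact this hx
  · intro h
    have : x = ∑ i, x i • basisVec n p i := by
      ext j
      simp [basisVec, Pi.single_apply]
    rw [this]
    refine Submodule.sum_mem _ fun i _ => ?_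
    by_cases hi : i ∈ S
    · exact Submodule.smul_mem _ _ (Submodule.subset_span ⟨i, hi, rfl⟩)
    · rw [h i hi, zero_smul]; exact Submodule.zero_mem _

lemma form_add_left {B : Matrix (Fin n) (Fin n) ℚ} (a b y : V n p) :
    form n p B (a + b) y = form n p B a y + form n p B b y := by
  rw [← Phi_apply, ← Phi_apply, ← Phi_apply, map_add, LinearMap.add_apply]

lemma form_sub_left {B : Matrix (Fin n) (Fin n) ℚ} (a b y : V n p) :
    form n p B (a - b) y = form n p B a y - form n p B b y := by
  rw [← Phi_apply, ← Phi_apply, ← Phi_apply, map_sub, LinearMap.sub_apply]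

set_option maxHeartbeats 1000000 in
lemma decomp {B : Matrix (Fin n) (Fin n) ℚ} (hp : p.Prime) (hBs : ∀ i j, B i j = B j i)
    {W : Submodule (ZMod p) (V n p)} (hW : Nonsing n p B W) (v : V n p) :
    ∃ w ∈ W, ∃ u, (∀ y ∈ W, form n p B u y = 0) ∧ v = w + u := by
  haveI : Fact p.Prime := ⟨hp⟩
  have hnd : ((Phi n p B).restrict W).Nondegenerate := by
    have hL : ((Phi n p B).restrict W).SeparatingLeft := by
      intro x hx
      have := hW x.1 x.2 (fun y hy => by
        have h2 := hx ⟨y, hy⟩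
        simp only [LinearMap.BilinForm.restrict_apply, LinearMap.domRestrict_apply,
          Phi_apply] at h2
        exact h2)
      exact Subtype.ext this
    refine ⟨hL, fun y hy => hL y (fun x => ?_)⟩
    have h3 := hy x
    simp only [LinearMap.BilinForm.restrict_apply, LinearMap.domRestrict_apply,
      Phi_apply] at h3 ⊢
    rw [form_symm n p hBs]
    exact h3
  have hc := LinearMap.BilinForm.isCompl_orthogonal_of_restrict_nondegenerate
    (Phi_isRefl n p hBs) hnd
  have htop : W ⊔ (Phi n p B).orthogonal W = ⊤ := hc.sup_eq_top
  have hv : v ∈ W ⊔ (Phi n p B).orthogonal W := htop ▸ Submodule.mem_top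
  obtain ⟨w, hw, u, hu, heq⟩ := Submodule.mem_sup.1 hv
  refine ⟨w, hw, u, fun y hy => ?_, heq.symm⟩
  have := hu y hy
  rw [Phi_apply] at this
  rw [form_symm n p hBs]
  exact this

lemma map_inv_map (g : GLV n p) (W : Submodule (ZMod p) (V n p)) :
    Submodule.map (g : GLV n p).1 (Submodule.map (↑g⁻¹ : Module.End (ZMod p) (V n p)) W) = W := by
  rw [← Submodule.map_comp, ← Module.End.mul_eq_comp, ← Units.val_mul, mul_inv_cancel,
    Units.val_one, Module.End.one_eq_id, Submodule.map_id]

lemma mem_OSub {B : Matrix (Fin n) (Fin n) ℚ} {W : Submodule (ZMod p) (V n p)} {g : GLV n p} :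
    g ∈ OSub n p B W ↔
      (∀ x y, form n p B (g.1 x) (g.1 y) = form n p B x y) ∧
        Submodule.map g.1 W = W ∧ perpFix n p B W g := Iff.rfl

/-- An orthogonal isometry stabilizing `W` maps the perp of `W` into itself. -/
lemma stab_perp {B : Matrix (Fin n) (Fin n) ℚ} {W : Submodule (ZMod p) (V n p)} {g : GLV n p}
    (hO : ∀ x y, form n p B (g.1 x) (g.1 y) = form n p B x y)
    (hm : Submodule.map g.1 W = W)
    {u : V n p} (hu : ∀ y ∈ W, form n p B u y = 0) :
    ∀ y ∈ W, form n p B (g.1 u) y = 0 := by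
  intro y hy
  rw [← hm] at hy
  obtain ⟨w, hw, rfl⟩ := hy
  rw [hO u w]
  exact hu w hw

/-- If `W ≤ W'` and `W` is nonsingular then `O(W) ≤ O(W')`. -/
lemma OSub_mono {B : Matrix (Fin n) (Fin n) ℚ} (hp : p.Prime) (hBs : ∀ i j, B i j = B j i)
    {W W' : Submodule (ZMod p) (V n p)} (hW : Nonsing n p B W) (hle : W ≤ W') :
    OSub n p B W ≤ OSub n p B W' := by
  have key : ∀ h : GLV n p, h ∈ OSub n p B W → Submodule.map h.1 W' ≤ W' := by
    intro h hh
    obtain ⟨h1, h2, h3⟩ := (mem_OSub n p).1 hh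
    rintro _ ⟨v, hv, rfl⟩
    obtain ⟨w, hw, u, hu, rfl⟩ := decomp n p hp hBs hW v
    have hfix : h.1 u = u := h3 u (fun y hy => hu y hy)
    rw [map_add, hfix]
    have hmw : h.1 w ∈ W := h2 ▸ Submodule.mem_map_of_mem hw
    have huW' : u ∈ W' := by
      have : u = (w + u) - w := by ring
      rw [this]
      exact Submodule.sub_mem _ hv (hle hw)
    exact Submodule.add_mem _ (hle hmw) huW'
  intro g hg
  obtain ⟨h1, h2, h3⟩ := (mem_OSub n p).1 hg
  refine (mem_OSub n p).2 ⟨h1, ?_, ?_⟩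
  · refine le_antisymm (key g hg) ?_
    have hginv : g⁻¹ ∈ OSub n p B W := (OSub n p B W).inv_mem hg
    conv_lhs => rw [← map_inv_map n p g W']
    exact Submodule.map_mono (key g⁻¹ hginv)
  · intro u hu
    exact h3 u (fun w hw => hu w (hle hw))

end Aux

/-- in the fully nonsingular case with `G₀ᵖ = O(V₀)` and
`G_{n-1}ᵖ = O(V_{n-1})`, one has `G₀ᵖ ∩ G_{n-1}ᵖ = O(V_{0,n-1})`. -/
theorem statement3
    (n p : ℕ) (hn : 3 ≤ n) (hp : p.Prime) (hodd : p ≠ 2)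
    (B : Matrix (Fin n) (Fin n) ℚ)
    (hB : GramOK n B) (hint : PIntegral n p B)
    (r : Fin n → GLV n p) (hr : ReflHyp n p B r)
    (hgen : Generic n p B)
    (hsq : ∃ i : Fin n, 1 ≤ (i : ℕ) ∧ (i : ℕ) ≤ n - 2 ∧
      ∃ t : ZMod p, t ≠ 0 ∧ redQ p (B i i) = t ^ 2)
    (hV0 : Nonsing n p B (spanV n p {i : Fin n | (i : ℕ) ≠ 0}))
    (hVn1 : Nonsing n p B (spanV n p {i : Fin n | (i : ℕ) ≠ n - 1}))
    (hV0n1 : Nonsing n p B (spanV n p {i : Fin n | (i : ℕ) ≠ 0 ∧ (i : ℕ) ≠ n - 1}))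
    (h0 : Subgroup.closure (r '' {i : Fin n | (i : ℕ) ≠ 0}) = OSub n p B (spanV n p {i : Fin n | (i : ℕ) ≠ 0}))
    (hn1 : Subgroup.closure (r '' {i : Fin n | (i : ℕ) ≠ n - 1}) = OSub n p B (spanV n p {i : Fin n | (i : ℕ) ≠ n - 1})) :
    Subgroup.closure (r '' {i : Fin n | (i : ℕ) ≠ 0}) ⊓ Subgroup.closure (r '' {i : Fin n | (i : ℕ) ≠ n - 1}) =
      OSub n p B (spanV n p {i : Fin n | (i : ℕ) ≠ 0 ∧ (i : ℕ) ≠ n - 1}) := by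
  rw [h0, hn1]
  have hBs : ∀ i j, B i j = B j i := hB.1
  set W0 := spanV n p {i : Fin n | (i : ℕ) ≠ 0} with hW0def
  set W1 := spanV n p {i : Fin n | (i : ℕ) ≠ n - 1} with hW1def
  set W := spanV n p {i : Fin n | (i : ℕ) ≠ 0 ∧ (i : ℕ) ≠ n - 1} with hWdef
  have hWeq : W = W0 ⊓ W1 := by
    ext x
    rw [hWdef, hW0def, hW1def]
    simp only [Submodule.mem_inf, mem_spanV, Set.mem_setOf_eq]
    constructor
    · intro h
      exact ⟨fun i hi => h i (fun hc => hi hc.1), fun i hi => h i (fun hc => hi hc.2)⟩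
    · rintro ⟨h1, h2⟩ i hi
      by_cases hA : (i : ℕ) ≠ 0
      · exact h2 i (fun hb => hi ⟨hA, hb⟩)
      · exact h1 i hA
  have hWle0 : W ≤ W0 := by rw [hWeq]; exact inf_le_left
  have hWle1 : W ≤ W1 := by rw [hWeq]; exact inf_le_right
  apply le_antisymm
  · intro g hg
    obtain ⟨hg0, hg1⟩ := Subgroup.mem_inf.1 hg
    obtain ⟨hO, hm0, hf0⟩ := (mem_OSub n p).1 hg0
    obtain ⟨-, hm1, hf1⟩ := (mem_OSub n p).1 hg1
    have key : ∀ h : GLV n p, h ∈ OSub n p B W0 ⊓ OSub n p B W1 →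
        Submodule.map h.1 W ≤ W := by
      intro h hh
      obtain ⟨hh0, hh1⟩ := Subgroup.mem_inf.1 hh
      rw [hWeq]
      refine le_trans (Submodule.map_inf_le h.1) ?_
      rw [((mem_OSub n p).1 hh0).2.1, ((mem_OSub n p).1 hh1).2.1]
    have hmW : Submodule.map g.1 W = W := by
      refine le_antisymm (key g hg) ?_
      conv_lhs => rw [← map_inv_map n p g W]
      exact Submodule.map_mono (key g⁻¹ (Subgroup.inv_mem _ hg))
    refine (mem_OSub n p).2 ⟨hO, hmW, ?_⟩
    intro v hv
    obtain ⟨w, hwW0, u, hu, rfl⟩ := decomp n p hp hBs hV0 v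
    have hgu : g.1 u = u := hf0 u hu
    have hwperp : ∀ y ∈ W, form n p B w y = 0 := by
      intro y hy
      have h1 := hv y hy
      rw [form_add_left, hu y (hWle0 hy), add_zero] at h1
      exact h1
    obtain ⟨l, hlW1, u2, hu2, hweq2⟩ := decomp n p hp hBs hVn1 w
    have hgu2 : g.1 u2 = u2 := hf1 u2 hu2
    have hd : g.1 w - w = g.1 l - l := by
      have hgw2 : g.1 w = g.1 l + u2 := by rw [hweq2, map_add, hgu2]
      rw [hgw2, hweq2]; abel
    have hgwW0 : g.1 w ∈ W0 := hm0 ▸ Submodule.mem_map_of_mem hwW0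
    have hglW1 : g.1 l ∈ W1 := hm1 ▸ Submodule.mem_map_of_mem hlW1
    have hdW0 : g.1 w - w ∈ W0 := Submodule.sub_mem _ hgwW0 hwW0
    have hdW1 : g.1 w - w ∈ W1 := by
      rw [hd]; exact Submodule.sub_mem _ hglW1 hlW1
    have hgwperp : ∀ y ∈ W, form n p B (g.1 w) y = 0 := stab_perp n p hO hmW hwperp
    have hdperp : ∀ y ∈ W, form n p B (g.1 w - w) y = 0 := fun y hy => by
      rw [form_sub_left, hgwperp y hy, hwperp y hy, sub_zero]
    have hdW : g.1 w - w ∈ W := by rw [hWeq]; exact Submodule.mem_inf.2 ⟨hdW0, hdW1⟩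
    have hgw : g.1 w = w := by
      have := hV0n1 _ hdW hdperp
      rwa [sub_eq_zero] at this
    rw [map_add, hgw, hgu]
  · exact le_inf (OSub_mono n p hp hBs hV0n1 hWle0) (OSub_mono n p hp hBs hV0n1 hWle1)

end Statement3
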